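/- Let μ be the standard Gumbel probability measure on ℝ, i.e. the Borel probability measure whose cumulative distribution function is F(t) = exp(−exp(−t)). Let n ≥ 1 and a : Fin n → ℝ, and let μⁿ be the n-fold product of μ on ℝⁿ. Then ∫ max_{i} (a_i + x_i) dμⁿ(x) = γ + log(Σ_{i} exp(a_i)), where γ is the Euler–Mascheroni constant. -/

import Mathlib

open MeasureTheory Real
open scoped NNReal ENNReal

lemma gumbel_aux_L1 : ∫ t in Set.Ioi (0:ℝ), Real.log t * Real.exp (-t)
    = -Real.eulerMascheroniConstant := by
  have h1 := Complex.hasDerivAt_GammaIntegral (s := (1:ℂ)) (by norm_num)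
  have h2 : Complex.Gamma =ᶠ[nhds (1:ℂ)] Complex.GammaIntegral := by
    have hopen : IsOpen {s : ℂ | 0 < s.re} := isOpen_lt continuous_const Complex.continuous_re
    filter_upwards [hopen.mem_nhds (by norm_num)] with s hs
    exact Complex.Gamma_eq_integral hs
  have h3 : HasDerivAt Complex.GammaIntegral (-(Real.eulerMascheroniConstant : ℂ)) 1 :=
    Complex.hasDerivAt_Gamma_one.congr_of_eventuallyEq h2.symm
  have h4 := h3.unique h1
  have h5 : (∫ t in Set.Ioi (0:ℝ), ((t:ℂ) ^ ((1:ℂ) - 1) * ((Real.log t : ℂ) * (Real.exp (-t) : ℂ))))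
      = ((∫ t in Set.Ioi (0:ℝ), Real.log t * Real.exp (-t) : ℝ) : ℂ) := by
    simp only [sub_self, Complex.cpow_zero, one_mul, ← Complex.ofReal_mul]
    exact integral_ofReal
  rw [h5] at h4
  exact_mod_cast h4.symm

lemma gumbel_mean (μ : Measure ℝ) [IsProbabilityMeasure μ]
    (hcdf : ∀ t : ℝ, μ (Set.Iic t) = ENNReal.ofReal (Real.exp (-Real.exp (-t)))) :
    Integrable (fun x : ℝ => x) μ ∧ ∫ x, x ∂μ = Real.eulerMascheroniConstant := by
  classical
  -- the exponential measure
  set f : ℝ → ℝ≥0 := fun t => Real.toNNReal (Real.exp (-t)) with hf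
  have hfm : Measurable f := (Real.continuous_exp.comp continuous_neg).measurable.real_toNNReal
  set ν : Measure ℝ := (volume.restrict (Set.Ioi 0)).withDensity fun t => (f t : ℝ≥0∞) with hν
  -- value of μ on Iio
  have hIio : ∀ c : ℝ, μ (Set.Iio c) = ENNReal.ofReal (Real.exp (-Real.exp (-c))) := by
    intro c
    have hU : Set.Iio c = ⋃ n : ℕ, Set.Iic (c - 1/(n+1)) := by
      ext x
      simp only [Set.mem_Iio, Set.mem_iUnion, Set.mem_Iic]
      constructor
      · intro hx
        obtain ⟨n, hn⟩ := exists_nat_one_div_lt (sub_pos.mpr hx)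
        exact ⟨n, by push_cast at hn ⊢; linarith⟩
      · rintro ⟨n, hn⟩
        have : (0:ℝ) < 1/(n+1) := by positivity
        linarith
    have hmono : Monotone (fun n : ℕ => Set.Iic (c - 1/(n+1))) := by
      intro m n hmn
      apply Set.Iic_subset_Iic.mpr
      have h1 : (1:ℝ)/(n+1) ≤ 1/(m+1) := by
        apply one_div_le_one_div_of_le (by positivity)
        push_cast; exact_mod_cast by exact_mod_cast add_le_add_left (Nat.cast_le.mpr hmn) 1
      linarith
    rw [hU, hmono.measure_iUnion]
    have hlim : Filter.Tendsto (fun n : ℕ => μ (Set.Iic (c - 1/(n+1)))) Filter.atTop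
        (nhds (ENNReal.ofReal (Real.exp (-Real.exp (-c))))) := by
      simp only [hcdf]
      apply (ENNReal.continuous_ofReal.tendsto _).comp
      apply (Real.continuous_exp.tendsto _).comp
      apply (continuous_neg.tendsto _).comp
      apply (Real.continuous_exp.tendsto _).comp
      apply (continuous_neg.tendsto _).comp
      have : Filter.Tendsto (fun n : ℕ => c - 1/((n:ℝ)+1)) Filter.atTop (nhds (c - 0)) :=
        (tendsto_const_nhds.sub tendsto_one_div_add_atTop_nhds_zero_nat)
      simpa using this
    have hmono2 : Monotone fun n : ℕ => μ (Set.Iic (c - 1/(n+1))) :=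
      fun m n hmn => measure_mono (hmono hmn)
    exact (tendsto_nhds_unique (tendsto_atTop_iSup hmono2) hlim)
  -- the mapped measure
  have hgm : Measurable fun x : ℝ => Real.exp (-x) :=
    (Real.continuous_exp.comp continuous_neg).measurable
  set m : Measure ℝ := Measure.map (fun x => Real.exp (-x)) μ with hm
  haveI : IsProbabilityMeasure m := Measure.isProbabilityMeasure_map hgm.aemeasurable
  have hmν : m = ν := by
    apply Measure.ext_of_Iic
    intro s
    rw [hm, Measure.map_apply hgm measurableSet_Iic]
    have hpre : (fun x => Real.exp (-x)) ⁻¹' Set.Iic s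
        = if 0 < s then Set.Ici (-Real.log s) else (∅ : Set ℝ) := by
      split_ifs with hs
      · ext x
        simp only [Set.mem_preimage, Set.mem_Iic, Set.mem_Ici]
        rw [← Real.le_log_iff_exp_le hs, neg_le]
      · ext x
        simp only [Set.mem_preimage, Set.mem_Iic, Set.mem_empty_iff_false, iff_false, not_le]
        exact lt_of_le_of_lt (not_lt.mp hs) (Real.exp_pos _)
    have hνs : ν (Set.Iic s) = if 0 < s then 1 - ENNReal.ofReal (Real.exp (-s)) else 0 := by
      rw [hν, withDensity_apply _ measurableSet_Iic, Measure.restrict_restrict measurableSet_Iic]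
      have : Set.Iic s ∩ Set.Ioi 0 = Set.Ioc 0 s := by
        ext x; simp only [Set.mem_inter_iff, Set.mem_Iic, Set.mem_Ioi, Set.mem_Ioc]; tauto
      rw [this]
      split_ifs with hs
      · have hint : IntegrableOn (fun t => Real.exp (-t)) (Set.Ioc 0 s) volume := by
          apply Continuous.integrableOn_Ioc
          exact Real.continuous_exp.comp continuous_neg
        have h1 : ∫⁻ t in Set.Ioc 0 s, (f t : ℝ≥0∞)
            = ENNReal.ofReal (∫ t in Set.Ioc 0 s, Real.exp (-t)) := by
          rw [ofReal_integral_eq_lintegral_ofReal hint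
            (Filter.Eventually.of_forall fun t => (Real.exp_pos _).le)]
          rfl
        rw [h1]
        have h2 : ∫ t in Set.Ioc 0 s, Real.exp (-t) = 1 - Real.exp (-s) := by
          rw [← intervalIntegral.integral_of_le hs.le]
          have := intervalIntegral.integral_comp_neg (a := (0:ℝ)) (b := s) (fun t => Real.exp t)
          rw [this, integral_exp]
          simp
        rw [h2, ENNReal.ofReal_sub _ (Real.exp_pos _).le]
        simp
      · have he : Set.Ioc 0 s = (∅ : Set ℝ) := Set.Ioc_eq_empty hs
        rw [he]
        simp
    rw [hpre, hνs]
    split_ifs with hs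
    · have hcompl : Set.Ici (-Real.log s) = (Set.Iio (-Real.log s))ᶜ := by simp
      rw [hcompl, measure_compl measurableSet_Iio (measure_ne_top μ _), measure_univ, hIio]
      congr 1
      rw [neg_neg, Real.exp_log hs]
    · simp
  -- integrability of log * exp on Ioi 0
  have hL1 := gumbel_aux_L1
  have hint0 : IntegrableOn (fun t => Real.log t * Real.exp (-t)) (Set.Ioi 0) volume := by
    by_contra h
    rw [integral_undef h] at hL1
    have := Real.one_half_lt_eulerMascheroniConstant
    linarith [hL1]
  -- transfer: integral over ν of -log
  have hlogm : Measurable fun t : ℝ => -Real.log t := Real.measurable_log.neg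
  have hsmul : ∀ t : ℝ, (f t : ℝ) • (-Real.log t) = -(Real.log t * Real.exp (-t)) := by
    intro t
    simp only [smul_eq_mul, hf, Real.coe_toNNReal _ (Real.exp_pos (-t)).le]
    ring
  have hνint : Integrable (fun t => -Real.log t) ν := by
    rw [hν, integrable_withDensity_iff_integrable_smul hfm]
    have : (fun t => f t • (-Real.log t)) = fun t => -(Real.log t * Real.exp (-t)) := by
      funext t; rw [← hsmul t]; rfl
    rw [this]
    exact hint0.neg
  have hνval : ∫ t, -Real.log t ∂ν = Real.eulerMascheroniConstant := by
    rw [hν, integral_withDensity_eq_integral_smul hfm]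
    have : (fun t => f t • (-Real.log t)) = fun t => -(Real.log t * Real.exp (-t)) := by
      funext t; rw [← hsmul t]; rfl
    rw [this, integral_neg, hL1, neg_neg]
  -- back to μ
  have hcomp : (fun x : ℝ => x) = (fun t => -Real.log t) ∘ (fun x => Real.exp (-x)) := by
    funext x; simp [Real.log_exp]
  constructor
  · rw [hcomp, ← integrable_map_measure hlogm.aestronglyMeasurable hgm.aemeasurable, ← hm, hmν]
    exact hνint
  · calc ∫ x, x ∂μ = ∫ x, ((fun t => -Real.log t) ∘ (fun x => Real.exp (-x))) x ∂μ := by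
          rw [← hcomp]
      _ = ∫ t, -Real.log t ∂m := (integral_map hgm.aemeasurable hlogm.aestronglyMeasurable).symm
      _ = Real.eulerMascheroniConstant := by rw [hmν]; exact hνval

theorem gumbel_logsumexp
    (μ : Measure ℝ) [IsProbabilityMeasure μ]
    (hcdf : ∀ t : ℝ, μ (Set.Iic t) = ENNReal.ofReal (Real.exp (-Real.exp (-t))))
    (n : ℕ) (hn : 1 ≤ n) (a : Fin n → ℝ) :
    ∫ x : Fin n → ℝ, (⨆ i : Fin n, (a i + x i)) ∂(Measure.pi fun _ : Fin n => μ)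
      = Real.eulerMascheroniConstant + Real.log (∑ i : Fin n, Real.exp (a i)) := by
  classical
  haveI : Nonempty (Fin n) := Fin.pos_iff_nonempty.mp hn
  set S : ℝ := ∑ i : Fin n, Real.exp (a i) with hS
  have hSpos : 0 < S := Finset.sum_pos (fun i _ => Real.exp_pos _) ⟨⟨0, hn⟩, Finset.mem_univ _⟩
  set c : ℝ := Real.log S with hc
  set P : Measure (Fin n → ℝ) := Measure.pi fun _ : Fin n => μ with hP
  set Y : (Fin n → ℝ) → ℝ := fun x => ⨆ i : Fin n, (a i + x i) with hY
  have hYm : Measurable Y :=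
    Measurable.iSup fun i => Measurable.const_add (f := fun x : Fin n → ℝ => x i) (measurable_pi_apply i) (a i)
  set Y' : (Fin n → ℝ) → ℝ := fun x => Y x - c with hY'
  have hY'm : Measurable Y' := hYm.sub measurable_const
  set μ' : Measure ℝ := Measure.map Y' P with hμ'
  haveI : IsProbabilityMeasure μ' := Measure.isProbabilityMeasure_map hY'm.aemeasurable
  have hcdf' : ∀ t : ℝ, μ' (Set.Iic t) = ENNReal.ofReal (Real.exp (-Real.exp (-t))) := by
    intro t
    rw [hμ', Measure.map_apply hY'm measurableSet_Iic]
    have hpre : Y' ⁻¹' Set.Iic t = Set.pi Set.univ fun i => Set.Iic (t + c - a i) := by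
      ext x
      simp only [Set.mem_preimage, Set.mem_Iic, hY', hY, Set.mem_pi, Set.mem_univ, true_implies,
        Set.mem_Iic]
      rw [sub_le_iff_le_add']
      rw [ciSup_le_iff ((Set.finite_range _).bddAbove)]
      constructor
      · intro h i; linarith [h i]
      · intro h i; linarith [h i]
    rw [hpre, hP, Measure.pi_pi]
    simp only [hcdf]
    rw [← ENNReal.ofReal_prod_of_nonneg (fun i _ => (Real.exp_pos _).le), ← Real.exp_sum]
    congr 2
    have key : ∑ i : Fin n, Real.exp (-(t + c - a i)) = Real.exp (-t) := by
      have : ∀ i : Fin n, Real.exp (-(t + c - a i)) = Real.exp (a i) * Real.exp (-(t + c)) := by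
        intro i; rw [← Real.exp_add]; ring_nf
      have hec : Real.exp (-(t + c)) = Real.exp (-t) * S⁻¹ := by
        rw [neg_add, Real.exp_add, hc, Real.exp_neg (Real.log S), Real.exp_log hSpos]
      rw [Finset.sum_congr rfl (fun i _ => this i), ← Finset.sum_mul, ← hS, hec,
        mul_comm (Real.exp (-t)) S⁻¹, ← mul_assoc, mul_inv_cancel₀ hSpos.ne', one_mul]
    rw [← key]
    rw [← Finset.sum_neg_distrib]
  obtain ⟨hint, hval⟩ := gumbel_mean μ' hcdf'
  have hval2 : ∫ x, Y' x ∂P = Real.eulerMascheroniConstant := by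
    rw [← hval, hμ', integral_map (f := fun y : ℝ => y) hY'm.aemeasurable aestronglyMeasurable_id]
  have hint2 : Integrable Y' P := by
    exact (integrable_map_measure (g := fun y : ℝ => y) aestronglyMeasurable_id
      hY'm.aemeasurable).mp hint
  have : (fun x => Y x) = fun x => Y' x + c := by funext x; simp [hY']
  calc ∫ x, Y x ∂P = ∫ x, (Y' x + c) ∂P := by rw [← this]
    _ = (∫ x, Y' x ∂P) + ∫ _, c ∂P := integral_add hint2 (integrable_const c)
    _ = Real.eulerMascheroniConstant + c := by rw [hval2, integral_const, probReal_univ]; simp
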